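/- Let Σ = {a,b,c} and n ≥ 2. For w ∈ Σ^n define Ψ(w) = w_2 w_1 w_3 w_2 w_4 w_3 ⋯ w_n w_{n−1} (a word of length 2n−2). Then w ∈ (a+b)* a c^+ (i.e. w = u a c^m with u ∈ {a,b}* and m ≥ 1) if and only if Ψ(w) contains ca as a subword but contains none of cca, caa, cb as a subword. -/

import Mathlib

/-- The three-letter alphabet `{a, b, c}`. -/
inductive ABC : Type
  | a | b | c
deriving DecidableEq

/-- The "feedback-sweeping" reading: `psi (w₁ w₂ ⋯ wₙ) = w₂ w₁ w₃ w₂ w₄ w₃ ⋯ wₙ wₙ₋₁`. -/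
def psi : List ABC → List ABC
  | x :: y :: rest => y :: x :: psi (y :: rest)
  | _ => []
termination_by w => w.length

open ABC List

lemma psi_cons (x y : ABC) (rest : List ABC) :
    psi (x :: y :: rest) = y :: x :: psi (y :: rest) := by
  rw [psi]

lemma psi_one (x : ABC) : psi [x] = [] := by
  rw [psi]
  intro _ _ _ h
  simp at h

lemma psi_replicate : ∀ k : ℕ, psi (c :: List.replicate k c) = List.replicate (2 * k) c := by
  intro k
  induction k with
  | zero => simpa using psi_one c
  | succ k ih =>
    rw [List.replicate_succ, psi_cons, ih]
    have : 2 * (k + 1) = (2 * k) + 1 + 1 := by ring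
    rw [this, List.replicate_succ, List.replicate_succ]

lemma cons_sublist_of_ne {x z : ABC} {l t : List ABC} (h : x ≠ z) :
    (x :: l).Sublist (z :: t) → (x :: l).Sublist t := by
  intro h'
  cases h' with
  | cons _ h'' => exact h''
  | cons_cons => exact absurd rfl h

lemma mem_psi : ∀ (rest : List ABC) (x y z : ABC), z ∈ x :: y :: rest → z ∈ psi (x :: y :: rest) := by
  intro rest
  induction rest with
  | nil =>
    intro x y z hz
    rw [psi_cons, psi_one]
    simp at hz ⊢
    tauto
  | cons r rs ih =>
    intro x y z hz
    rw [psi_cons]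
    rcases List.mem_cons.mp hz with rfl | hz
    · simp
    · right; right; exact ih y r z hz

/-- The language predicate. -/
def InL (w : List ABC) : Prop :=
  ∃ (u : List ABC) (m : ℕ), (∀ x ∈ u, x = ABC.a ∨ x = ABC.b) ∧ 1 ≤ m ∧
    w = u ++ ABC.a :: List.replicate m ABC.c

lemma InL_head_ne_c {y : ABC} {l : List ABC} (h : InL (y :: l)) : y ≠ c := by
  obtain ⟨u, m, hu, hm, he⟩ := h
  cases u with
  | nil =>
    simp at he
    rw [he.1]; decide
  | cons z u' =>
    simp at he
    rw [he.1]
    rcases hu z (by simp) with h | h <;> rw [h] <;> decide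

lemma L_two (x y : ABC) : InL [x, y] ↔ x = a ∧ y = c := by
  constructor
  · rintro ⟨u, m, hu, hm, he⟩
    have hlen := congrArg List.length he
    simp at hlen
    have hu0 : u.length = 0 := by omega
    have hm1 : m = 1 := by omega
    rw [List.length_eq_zero_iff] at hu0
    subst hu0; subst hm1
    simp at he
    exact ⟨he.1, he.2⟩
  · rintro ⟨rfl, rfl⟩
    exact ⟨[], 1, by simp, le_refl 1, by simp⟩

lemma L_cons (x y r : ABC) (rs : List ABC) :
    InL (x :: y :: r :: rs) ↔
      ((x = a ∨ x = b) ∧ InL (y :: r :: rs)) ∨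
        (x = a ∧ y = c ∧ ∀ z ∈ r :: rs, z = c) := by
  constructor
  · rintro ⟨u, m, hu, hm, he⟩
    cases u with
    | nil =>
      simp at he
      obtain ⟨hx, htail⟩ := he
      right
      refine ⟨hx, ?_, ?_⟩
      · have : y ∈ List.replicate m c := by rw [← htail]; simp
        exact List.eq_of_mem_replicate this
      · intro z hz
        have : z ∈ List.replicate m c := by rw [← htail]; simp [hz]
        exact List.eq_of_mem_replicate this
    | cons z u' =>
      simp at he
      obtain ⟨hxz, htail⟩ := he
      left
      refine ⟨hxz ▸ hu z (by simp), u', m, fun t ht => hu t (by simp [ht]), hm, htail⟩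
  · rintro (⟨hx, u, m, hu, hm, he⟩ | ⟨rfl, rfl, hall⟩)
    · refine ⟨x :: u, m, ?_, hm, by simp [he]⟩
      intro t ht
      rcases List.mem_cons.mp ht with rfl | ht
      · exact hx
      · exact hu t ht
    · refine ⟨[], rs.length + 2, by simp, by omega, ?_⟩
      have : r :: rs = List.replicate (rs.length + 1) c := by
        have := List.eq_replicate_of_mem hall
        simpa using this
      simp only [List.nil_append]
      rw [show rs.length + 2 = (rs.length + 1) + 1 by ring, List.replicate_succ]
      rw [this]

lemma key : ∀ w : List ABC, 2 ≤ w.length →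
    (InL w ↔
      ([c, a].Sublist (psi w) ∧
        ¬ [c, c, a].Sublist (psi w) ∧
        ¬ [c, a, a].Sublist (psi w) ∧
        ¬ [c, b].Sublist (psi w))) := by
  intro w
  induction w with
  | nil => intro h; simp at h
  | cons x t ih =>
    intro hlen
    match t, ih with
    | [], _ => simp at hlen
    | [y], _ =>
      rw [L_two, psi_cons, psi_one]
      cases x <;> cases y <;> decide
    | y :: r :: rs, ih =>
      have ihQ := ih (by simp)
      rw [L_cons, psi_cons]
      set p := psi (y :: r :: rs) with hp
      constructor
      · rintro (⟨hx, hL⟩ | ⟨rfl, rfl, hall⟩)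
        · obtain ⟨h1, h2, h3, h4⟩ := ihQ.mp hL
          have hy : y ≠ c := InL_head_ne_c hL
          have hxc : x ≠ c := by rcases hx with rfl | rfl <;> decide
          refine ⟨List.Sublist.cons y (List.Sublist.cons x h1), ?_, ?_, ?_⟩
          · intro hS
            exact h2 (cons_sublist_of_ne (Ne.symm hxc) (cons_sublist_of_ne (Ne.symm hy) hS))
          · intro hS
            exact h3 (cons_sublist_of_ne (Ne.symm hxc) (cons_sublist_of_ne (Ne.symm hy) hS))
          · intro hS
            exact h4 (cons_sublist_of_ne (Ne.symm hxc) (cons_sublist_of_ne (Ne.symm hy) hS))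
        · -- w = a :: c :: (all c's)
          have hrep : r :: rs = List.replicate (rs.length + 1) c := by
            have := List.eq_replicate_of_mem hall
            simpa using this
          have hpval : p = List.replicate (2 * (rs.length + 1)) c := by
            rw [hp, hrep, psi_replicate]
          rw [hpval]
          set R := List.replicate (2 * (rs.length + 1)) c with hR
          refine ⟨?_, ?_, ?_, ?_⟩
          · exact List.Sublist.cons₂ c (List.Sublist.cons₂ a (List.nil_sublist R))
          · intro hS
            rw [List.cons_sublist_cons] at hS
            have hS2 := cons_sublist_of_ne (by decide) hS
            have : a ∈ R := hS2.subset (by simp)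
            have := List.eq_of_mem_replicate this
            exact absurd this (by decide)
          · intro hS
            rw [List.cons_sublist_cons, List.cons_sublist_cons] at hS
            have : a ∈ R := hS.subset (by simp)
            have := List.eq_of_mem_replicate this
            exact absurd this (by decide)
          · intro hS
            rw [List.cons_sublist_cons] at hS
            have hb : b ∈ a :: R := hS.subset (by simp)
            rcases List.mem_cons.mp hb with h | h
            · exact absurd h (by decide)
            · exact absurd (List.eq_of_mem_replicate h) (by decide)
      · rintro ⟨h1, h2, h3, h4⟩
        cases y with
        | a =>
          cases x with
          | a =>
            left
            refine ⟨Or.inl rfl, ihQ.mpr ⟨?_, ?_, ?_, ?_⟩⟩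
            · exact cons_sublist_of_ne (by decide) (cons_sublist_of_ne (by decide) h1)
            · intro hS; exact h2 (List.Sublist.cons a (List.Sublist.cons a hS))
            · intro hS; exact h3 (List.Sublist.cons a (List.Sublist.cons a hS))
            · intro hS; exact h4 (List.Sublist.cons a (List.Sublist.cons a hS))
          | b =>
            left
            refine ⟨Or.inr rfl, ihQ.mpr ⟨?_, ?_, ?_, ?_⟩⟩
            · exact cons_sublist_of_ne (by decide) (cons_sublist_of_ne (by decide) h1)
            · intro hS; exact h2 (List.Sublist.cons a (List.Sublist.cons b hS))
            · intro hS; exact h3 (List.Sublist.cons a (List.Sublist.cons b hS))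
            · intro hS; exact h4 (List.Sublist.cons a (List.Sublist.cons b hS))
          | c =>
            exfalso
            have hpe : p = r :: a :: psi (r :: rs) := by rw [hp, psi_cons]
            cases r with
            | a =>
              apply h3
              rw [hpe]
              exact List.Sublist.cons a (List.Sublist.cons₂ c
                (List.Sublist.cons₂ a (List.Sublist.cons₂ a (List.nil_sublist _))))
            | b =>
              apply h4
              rw [hpe]
              exact List.Sublist.cons a (List.Sublist.cons₂ c
                (List.Sublist.cons₂ b (List.nil_sublist _)))
            | c =>
              apply h2
              rw [hpe]
              exact List.Sublist.cons a (List.Sublist.cons₂ c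
                (List.Sublist.cons₂ c (List.Sublist.cons₂ a (List.nil_sublist _))))
        | b =>
          cases x with
          | a =>
            left
            refine ⟨Or.inl rfl, ihQ.mpr ⟨?_, ?_, ?_, ?_⟩⟩
            · exact cons_sublist_of_ne (by decide) (cons_sublist_of_ne (by decide) h1)
            · intro hS; exact h2 (List.Sublist.cons b (List.Sublist.cons a hS))
            · intro hS; exact h3 (List.Sublist.cons b (List.Sublist.cons a hS))
            · intro hS; exact h4 (List.Sublist.cons b (List.Sublist.cons a hS))
          | b =>
            left
            refine ⟨Or.inr rfl, ihQ.mpr ⟨?_, ?_, ?_, ?_⟩⟩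
            · exact cons_sublist_of_ne (by decide) (cons_sublist_of_ne (by decide) h1)
            · intro hS; exact h2 (List.Sublist.cons b (List.Sublist.cons b hS))
            · intro hS; exact h3 (List.Sublist.cons b (List.Sublist.cons b hS))
            · intro hS; exact h4 (List.Sublist.cons b (List.Sublist.cons b hS))
          | c =>
            exfalso
            have hpe : p = r :: b :: psi (r :: rs) := by rw [hp, psi_cons]
            apply h4
            rw [hpe]
            exact List.Sublist.cons b (List.Sublist.cons₂ c
              (List.Sublist.cons r (List.Sublist.cons₂ b (List.nil_sublist _))))
        | c =>
          cases x with
          | a =>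
            right
            refine ⟨rfl, rfl, ?_⟩
            have hap : a ∉ p := by
              intro ha
              exact h3 (List.Sublist.cons₂ c (List.Sublist.cons₂ a
                (List.singleton_sublist.mpr ha)))
            have hbp : b ∉ p := by
              intro hb
              exact h4 (List.Sublist.cons₂ c (List.Sublist.cons a
                (List.singleton_sublist.mpr hb)))
            have hav : a ∉ c :: r :: rs := fun h => hap (mem_psi _ _ _ _ h)
            have hbv : b ∉ c :: r :: rs := fun h => hbp (mem_psi _ _ _ _ h)
            intro z hz
            cases z with
            | a => exact absurd (by simp [hz]) hav
            | b => exact absurd (by simp [hz]) hbv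
            | c => rfl
          | b =>
            exfalso
            exact h4 (List.Sublist.cons₂ c (List.Sublist.cons₂ b (List.nil_sublist _)))
          | c =>
            exfalso
            have hain : a ∈ c :: c :: p := h1.subset (by simp)
            rw [List.mem_cons, List.mem_cons] at hain
            have hap : a ∈ p := by
              rcases hain with h | h | h
              · exact absurd h (by decide)
              · exact absurd h (by decide)
              · exact h
            exact h2 (List.Sublist.cons₂ c (List.Sublist.cons₂ c
              (List.singleton_sublist.mpr hap)))

theorem stmt_5 (n : ℕ) (hn : 2 ≤ n) (w : List ABC) (hw : w.length = n) :
    (∃ (u : List ABC) (m : ℕ), (∀ x ∈ u, x = ABC.a ∨ x = ABC.b) ∧ 1 ≤ m ∧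
        w = u ++ ABC.a :: List.replicate m ABC.c) ↔
      ([ABC.c, ABC.a].Sublist (psi w) ∧
        ¬ [ABC.c, ABC.c, ABC.a].Sublist (psi w) ∧
        ¬ [ABC.c, ABC.a, ABC.a].Sublist (psi w) ∧
        ¬ [ABC.c, ABC.b].Sublist (psi w)) := by
  have := key w (by omega)
  exact this
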